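/- Let δ ∈ (0,1) and β ∈ [2δ, 2]. For all θ, θ̃ > 0: θ̃^{1-β/2}·(θ^{β/2} - θ̃^{β/2} - (β/(2δ))·θ̃^{β/2-δ}·(θ^δ - θ̃^δ)) ≤ θ - θ̃ - (1/δ)·θ̃^{1-δ}·(θ^δ - θ̃^δ). -/

import Mathlib

open Real

lemma key_one_var (δ s x : ℝ) (hδ0 : 0 < δ) (hδ1 : δ < 1) (hsδ : δ ≤ s) (hs1 : s ≤ 1)
    (hx : 0 < x) :
    x ^ s - 1 - (s / δ) * (x ^ δ - 1) ≤ x - 1 - (1 / δ) * (x ^ δ - 1) := by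
  set α : ℝ := (s - δ) / (1 - δ) with hα
  have h1δ : (0:ℝ) < 1 - δ := by linarith
  have hα0 : 0 ≤ α := div_nonneg (by linarith) h1δ.le
  have hα1 : α ≤ 1 := by rw [hα, div_le_one h1δ]; linarith
  have hαe : α * (1 - δ) = s - δ := by rw [hα, div_mul_cancel₀ _ h1δ.ne']
  -- AM-GM 1 : x^s ≤ α x + (1-α) x^δ
  have hgm1 : x ^ α * (x ^ δ) ^ (1 - α) ≤ α * x + (1 - α) * x ^ δ := by
    simpa using Real.geom_mean_le_arith_mean2_weighted hα0
      (by linarith : (0:ℝ) ≤ 1 - α) hx.le (Real.rpow_nonneg hx.le δ) (by ring)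
  have hxs : x ^ α * (x ^ δ) ^ (1 - α) = x ^ s := by
    rw [← Real.rpow_mul hx.le, ← Real.rpow_add hx]
    congr 1
    linear_combination hαe
  rw [hxs] at hgm1
  -- AM-GM 2 : x^δ ≤ δ x + (1-δ)
  have hgm2 : x ^ δ * (1:ℝ) ^ (1 - δ) ≤ δ * x + (1 - δ) * 1 :=
    Real.geom_mean_le_arith_mean2_weighted hδ0.le h1δ.le hx.le zero_le_one (by ring)
  rw [Real.one_rpow, mul_one, mul_one] at hgm2
  have hs' : (0:ℝ) ≤ 1 - s := by linarith
  set q : ℝ := (1 - s) / (1 - δ) with hq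
  have hq0 : 0 ≤ q := div_nonneg hs' h1δ.le
  have hq1 : δ * (1 - α) + (1 - s) = q := by rw [hα, hq]; field_simp; ring
  have hq2 : α * δ + q * δ = δ := by rw [hα, hq]; field_simp; ring
  have hq3 : q * (1 - δ) = 1 - s := by rw [hq]; field_simp
  have hkey : δ * x ^ s + (1 - s) * x ^ δ ≤ δ * x + (1 - s) := by
    calc δ * x ^ s + (1 - s) * x ^ δ
        ≤ δ * (α * x + (1 - α) * x ^ δ) + (1 - s) * x ^ δ := by
          linarith [mul_le_mul_of_nonneg_left hgm1 hδ0.le]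
      _ = α * δ * x + (δ * (1 - α) + (1 - s)) * x ^ δ := by ring
      _ = α * δ * x + q * x ^ δ := by rw [hq1]
      _ ≤ α * δ * x + q * (δ * x + (1 - δ)) := by
          linarith [mul_le_mul_of_nonneg_left hgm2 hq0]
      _ = (α * δ + q * δ) * x + q * (1 - δ) := by ring
      _ = δ * x + (1 - s) := by rw [hq2, hq3]
  rw [← sub_nonneg]
  have h2 : 0 ≤ (δ * x + (1 - s) - (δ * x ^ s + (1 - s) * x ^ δ)) / δ :=
    div_nonneg (by linarith) hδ0.le
  have e : x - 1 - 1 / δ * (x ^ δ - 1) - (x ^ s - 1 - s / δ * (x ^ δ - 1))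
      = (δ * x + (1 - s) - (δ * x ^ s + (1 - s) * x ^ δ)) / δ := by
    field_simp
    ring
  rw [e]; exact h2

/-- For `δ ∈ (0,1)` and `β ∈ [2δ, 2]`, for all `θ, θ̃ > 0`:
`θ̃^(1-β/2) (θ^(β/2) - θ̃^(β/2) - (β/(2δ)) θ̃^(β/2-δ) (θ^δ - θ̃^δ))
  ≤ θ - θ̃ - (1/δ) θ̃^(1-δ) (θ^δ - θ̃^δ)`. -/
theorem stmt5 (δ : ℝ) (hδ : δ ∈ Set.Ioo (0 : ℝ) 1)
    (β : ℝ) (hβ : β ∈ Set.Icc (2 * δ) 2) :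
    ∀ θ θt : ℝ, 0 < θ → 0 < θt →
      θt ^ (1 - β / 2) *
          (θ ^ (β / 2) - θt ^ (β / 2)
            - (β / (2 * δ)) * θt ^ (β / 2 - δ) * (θ ^ δ - θt ^ δ))
        ≤ θ - θt - (1 / δ) * θt ^ (1 - δ) * (θ ^ δ - θt ^ δ) := by
  obtain ⟨hδ0, hδ1⟩ := hδ
  obtain ⟨hβl, hβr⟩ := hβ
  intro θ θt hθ hθt
  set s : ℝ := β / 2 with hs
  have hsδ : δ ≤ s := by rw [hs]; linarith
  have hs1 : s ≤ 1 := by rw [hs]; linarith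
  set x : ℝ := θ / θt with hxdef
  have hx : 0 < x := div_pos hθ hθt
  have hθeq : θ = x * θt := by rw [hxdef, div_mul_cancel₀ _ hθt.ne']
  have hθs : θ ^ s = x ^ s * θt ^ s := by
    rw [hθeq, Real.mul_rpow hx.le hθt.le]
  have hθδ : θ ^ δ = x ^ δ * θt ^ δ := by
    rw [hθeq, Real.mul_rpow hx.le hθt.le]
  have h1 : θt ^ (1 - s) * θt ^ s = θt := by
    rw [← Real.rpow_add hθt, show 1 - s + s = 1 by ring, Real.rpow_one]
  have h2 : θt ^ (1 - s) * (θt ^ (s - δ) * θt ^ δ) = θt := by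
    rw [← Real.rpow_add hθt, ← Real.rpow_add hθt,
      show 1 - s + (s - δ + δ) = 1 by ring, Real.rpow_one]
  have h3 : θt ^ (1 - δ) * θt ^ δ = θt := by
    rw [← Real.rpow_add hθt, show 1 - δ + δ = 1 by ring, Real.rpow_one]
  have hβs : β / (2 * δ) = s / δ := by rw [hs]; ring
  have eL : θt ^ (1 - s) *
      (θ ^ s - θt ^ s - (β / (2 * δ)) * θt ^ (s - δ) * (θ ^ δ - θt ^ δ))
      = θt * (x ^ s - 1 - (s / δ) * (x ^ δ - 1)) := by
    rw [hβs, hθs, hθδ]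
    linear_combination (x ^ s - 1) * h1 - (s / δ) * (x ^ δ - 1) * h2
  have eR : θ - θt - (1 / δ) * θt ^ (1 - δ) * (θ ^ δ - θt ^ δ)
      = θt * (x - 1 - (1 / δ) * (x ^ δ - 1)) := by
    rw [hθδ]
    linear_combination hθeq - (1 / δ) * (x ^ δ - 1) * h3
  rw [eL, eR]
  exact mul_le_mul_of_nonneg_left (key_one_var δ s x hδ0 hδ1 hsδ hs1 hx) hθt.le
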